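/- Let F : W → ℝⁿ be a C^∞ map on an open set W ⊆ ℝᵐ, let a₀ ∈ ℝⁿ, and let y₀ ∈ W be a local minimizer of f_{a₀}(y) := ½‖a₀ − F(y)‖² such that the Hessian of f_{a₀} at y₀ is invertible. Then there exist open neighborhoods A ⊆ ℝⁿ of a₀ and Y ⊆ W of y₀ with compact closure cl(Y) ⊆ W, and a C^∞ map g : A → Y with g(a₀) = y₀, such that for every a ∈ A the function f_a(y) := ½‖a − F(y)‖² attains its minimum over cl(Y) at the unique point g(a) (which lies in the open set Y), and g(a) is the only critical point of f_a in Y. -/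

import Mathlib

open Filter Topology
open scoped RealInnerProductSpace

noncomputable section

open Set Metric
set_option maxSynthPendingDepth 3


private lemma second_deriv_nonneg_of_isLocalMin
    {E : Type*} [NormedAddCommGroup E] [NormedSpace ℝ E]
    {f : E → ℝ} {f'' : E →L[ℝ] E →L[ℝ] ℝ} {x : E}
    (hd : ∀ᶠ y in 𝓝 x, HasFDerivAt f (fderiv ℝ f y) y)
    (h2 : HasFDerivAt (fderiv ℝ f) f'' x)
    (hmin : IsLocalMin f x) (v : E) : 0 ≤ f'' v v := by
  by_contra hneg
  push_neg at hneg
  set γ : ℝ → E := fun t => x + t • v with hγdef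
  have hγc : Continuous γ := by fun_prop
  have hγ0 : γ 0 = x := by simp [hγdef]
  have hγt : Tendsto γ (𝓝 0) (𝓝 x) := hγ0 ▸ hγc.tendsto 0
  have hγ' : ∀ t : ℝ, HasDerivAt γ v t := fun t => by
    have h := ((hasDerivAt_id t).smul_const v).const_add x; rw [one_smul] at h; exact h
  set ψ : ℝ → ℝ := fun t => fderiv ℝ f (γ t) v with hψdef
  set φ : ℝ → ℝ := fun t => f (γ t) with hφdef
  have hφ' : ∀ᶠ t in 𝓝 (0:ℝ), HasDerivAt φ (ψ t) t :=
    (hγt.eventually hd).mono fun t ht => ht.comp_hasDerivAt t (hγ' t)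
  have hψ' : HasDerivAt ψ (f'' v v) 0 := by
    have h1 : HasDerivAt (fun t => fderiv ℝ f (γ t)) (f'' v) 0 := by
      have h2' : HasFDerivAt (fderiv ℝ f) f'' (γ 0) := hγ0.symm ▸ h2
      exact h2'.comp_hasDerivAt 0 (hγ' 0)
    exact (ContinuousLinearMap.apply ℝ ℝ v).hasFDerivAt.comp_hasDerivAt 0 h1
  have hψ0 : ψ 0 = 0 := by
    simp [hψdef, hγ0, hmin.fderiv_eq_zero]
  -- eventually ψ t < 0 for t > 0 small
  have hslope : Tendsto (slope ψ 0) (𝓝[>] 0) (𝓝 (f'' v v)) :=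
    (hasDerivAt_iff_tendsto_slope.1 hψ').mono_left
      (nhdsWithin_mono 0 (fun t ht => ne_of_gt ht))
  have hev2 : ∀ᶠ t in 𝓝[>] (0:ℝ), ψ t < 0 := by
    filter_upwards [hslope.eventually_lt_const hneg, self_mem_nhdsWithin] with t hts htpos
    have : slope ψ 0 t = ψ t / t := by simp [slope_def_field, hψ0]
    rw [this] at hts
    have := mul_lt_mul_of_pos_right hts (show (0:ℝ) < t from htpos)
    rw [div_mul_cancel₀] at this
    · linarith
    · exact ne_of_gt htpos
  have hminφ : ∀ᶠ t in 𝓝 (0:ℝ), φ 0 ≤ φ t := by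
    have := hγt.eventually hmin
    filter_upwards [this] with t ht
    simpa [hφdef, hγ0] using ht
  rw [Metric.eventually_nhds_iff] at hφ' hminφ
  obtain ⟨δ₁, hδ₁, h₁⟩ := hφ'
  obtain ⟨δ₃, hδ₃, h₃⟩ := hminφ
  rw [eventually_nhdsWithin_iff, Metric.eventually_nhds_iff] at hev2
  obtain ⟨δ₂, hδ₂, h₂⟩ := hev2
  set δ := min (min δ₁ δ₂) δ₃ / 2 with hδdef
  have hm : 0 < min (min δ₁ δ₂) δ₃ := lt_min (lt_min hδ₁ hδ₂) hδ₃
  have hδpos : 0 < δ := by positivity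
  have hδlt : δ < min (min δ₁ δ₂) δ₃ := half_lt_self hm
  have hδ1 : δ < δ₁ := hδlt.trans_le ((min_le_left _ _).trans (min_le_left _ _))
  have hδ2 : δ < δ₂ := hδlt.trans_le ((min_le_left _ _).trans (min_le_right _ _))
  have hδ3 : δ < δ₃ := hδlt.trans_le (min_le_right _ _)
  have hdist : ∀ t ∈ Icc (0:ℝ) δ, dist t 0 ≤ δ := by
    intro t ht
    rw [Real.dist_eq, sub_zero, abs_of_nonneg ht.1]
    exact ht.2
  have hanti : StrictAntiOn φ (Icc 0 δ) := by
    apply strictAntiOn_of_deriv_neg (convex_Icc 0 δ)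
    · intro t ht
      exact (h₁ (lt_of_le_of_lt (hdist t ht) hδ1)).continuousAt.continuousWithinAt
    · intro t ht
      rw [interior_Icc] at ht
      have htI : t ∈ Icc (0:ℝ) δ := ⟨le_of_lt ht.1, le_of_lt ht.2⟩
      rw [(h₁ (lt_of_le_of_lt (hdist t htI) hδ1)).deriv]
      exact h₂ (lt_of_le_of_lt (hdist t htI) hδ2) ht.1
  have hlt : φ δ < φ 0 :=
    hanti (left_mem_Icc.2 (le_of_lt hδpos)) (right_mem_Icc.2 (le_of_lt hδpos)) hδpos
  have hge : φ 0 ≤ φ δ := by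
    apply h₃
    rw [Real.dist_eq, sub_zero, abs_of_nonneg (le_of_lt hδpos)]
    exact hδ3
  linarith

private lemma key_segment
    {E : Type*} [NormedAddCommGroup E] [NormedSpace ℝ E]
    {s : Set E} (hs : Convex ℝ s) {f : E → ℝ} {f' : E → E →L[ℝ] ℝ}
    {f'' : E → E →L[ℝ] E →L[ℝ] ℝ}
    (hd1 : ∀ z ∈ s, HasFDerivAt f (f' z) z)
    (hd2 : ∀ z ∈ s, HasFDerivAt f' (f'' z) z)
    (hpos : ∀ z ∈ s, ∀ v : E, v ≠ 0 → 0 < f'' z v v)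
    {x y : E} (hx : x ∈ s) (hy : y ∈ s) (hxy : y ≠ x) (hcrit : f' x = 0) :
    f x < f y ∧ 0 < f' y (y - x) := by
  have hv : y - x ≠ 0 := sub_ne_zero.2 hxy
  set γ : ℝ → E := fun t => x + t • (y - x) with hγdef
  have hγmem : ∀ t ∈ Icc (0:ℝ) 1, γ t ∈ s := fun t ht => hs.add_smul_sub_mem hx hy ht
  have hγ' : ∀ t : ℝ, HasDerivAt γ (y - x) t := fun t => by
    have h := ((hasDerivAt_id t).smul_const (y - x)).const_add x; rw [one_smul] at h; exact h
  have hγ0 : γ 0 = x := by simp [hγdef]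
  have hγ1 : γ 1 = y := by simp [hγdef]
  set ψ : ℝ → ℝ := fun t => f' (γ t) (y - x) with hψdef
  have hψ' : ∀ t ∈ Icc (0:ℝ) 1, HasDerivAt ψ (f'' (γ t) (y - x) (y - x)) t := fun t ht =>
    (ContinuousLinearMap.apply ℝ ℝ (y - x)).hasFDerivAt.comp_hasDerivAt t
      ((hd2 _ (hγmem t ht)).comp_hasDerivAt t (hγ' t))
  have hψmono : StrictMonoOn ψ (Icc 0 1) := by
    apply strictMonoOn_of_deriv_pos (convex_Icc 0 1)
    · intro t ht
      exact (hψ' t ht).continuousAt.continuousWithinAt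
    · intro t ht
      rw [interior_Icc] at ht
      rw [(hψ' t (Ioo_subset_Icc_self ht)).deriv]
      exact hpos _ (hγmem t (Ioo_subset_Icc_self ht)) (y - x) hv
  have hψ0 : ψ 0 = 0 := by simp [hψdef, hγ0, hcrit]
  have hψpos : ∀ t ∈ Ioc (0:ℝ) 1, 0 < ψ t := fun t ht => by
    have := hψmono (left_mem_Icc.2 zero_le_one) ⟨le_of_lt ht.1, ht.2⟩ ht.1
    linarith [hψ0 ▸ this]
  set φ : ℝ → ℝ := fun t => f (γ t) with hφdef
  have hφ' : ∀ t ∈ Icc (0:ℝ) 1, HasDerivAt φ (ψ t) t := fun t ht =>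
    (hd1 _ (hγmem t ht)).comp_hasDerivAt t (hγ' t)
  have hφmono : StrictMonoOn φ (Icc 0 1) := by
    apply strictMonoOn_of_deriv_pos (convex_Icc 0 1)
    · intro t ht
      exact (hφ' t ht).continuousAt.continuousWithinAt
    · intro t ht
      rw [interior_Icc] at ht
      rw [(hφ' t (Ioo_subset_Icc_self ht)).deriv]
      exact hψpos t ⟨ht.1, le_of_lt ht.2⟩
  constructor
  · have h := hφmono (left_mem_Icc.2 zero_le_one) (right_mem_Icc.2 zero_le_one) one_pos
    have e0 : φ 0 = f x := by rw [hφdef]; simp only []; rw [hγ0]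
    have e1 : φ 1 = f y := by rw [hφdef]; simp only []; rw [hγ1]
    rw [e0, e1] at h; exact h
  · have h := hψpos 1 ⟨one_pos, le_refl 1⟩
    have e1 : ψ 1 = f' y (y - x) := by rw [hψdef]; simp only []; rw [hγ1]
    rw [e1] at h; exact h


set_option maxHeartbeats 1000000 in
private theorem coercivity_of_psd {E : Type*} [NormedAddCommGroup E] [InnerProductSpace ℝ E]
    [FiniteDimensional ℝ E] (H Hinv : E →L[ℝ] E)
    (hHinv₂ : Hinv.comp H = ContinuousLinearMap.id ℝ E)
    (hpsd : ∀ v : E, 0 ≤ ⟪H v, v⟫)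
    (hsymm : ∀ v w : E, ⟪H v, w⟫ = ⟪H w, v⟫) :
    ∃ c : ℝ, 0 < c ∧ ∀ v : E, c * ‖v‖ ^ 2 ≤ ⟪H v, v⟫ := by
  have hpd : ∀ v : E, v ≠ 0 → 0 < ⟪H v, v⟫ := by
    intro v hv
    rcases (hpsd v).lt_or_eq with h | h
    · exact h
    · exfalso
      have hinner0 : ∀ w : E, ⟪H v, w⟫ = 0 := by
        intro w
        have key : ∀ t : ℝ, 0 ≤ 2 * t * ⟪H v, w⟫ + t ^ 2 * ⟪H w, w⟫ := by
          intro t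
          have h1 := hpsd (v + t • w)
          have hexp : ⟪H (v + t • w), v + t • w⟫
              = ⟪H v, v⟫ + t * ⟪H v, w⟫ + t * ⟪H w, v⟫ + t ^ 2 * ⟪H w, w⟫ := by
            simp only [map_add, map_smul, inner_add_left, inner_add_right,
              real_inner_smul_left, real_inner_smul_right]
            ring
          rw [hexp, ← h, hsymm w v] at h1
          nlinarith [h1]
        have hd := discrim_le_zero (a := ⟪H w, w⟫) (b := 2 * ⟪H v, w⟫) (c := 0)
          (fun t => by nlinarith [key t])
        rw [discrim] at hd
        have hb2 : (⟪H v, w⟫ : ℝ) ^ 2 ≤ 0 := by nlinarith [hd]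
        have hb0 : (⟪H v, w⟫ : ℝ) ^ 2 = 0 := le_antisymm hb2 (sq_nonneg _)
        exact pow_eq_zero_iff two_ne_zero |>.mp hb0
      have hHv : H v = 0 := inner_self_eq_zero.mp (hinner0 (H v))
      have hv0 : v = 0 := by
        have h3 := DFunLike.congr_fun hHinv₂ v
        simpa [hHv] using h3.symm
      exact hv hv0
  by_cases hsph : (Metric.sphere (0:E) 1).Nonempty
  · have hcont : Continuous fun v : E => ⟪H v, v⟫ := H.continuous.inner continuous_id
    obtain ⟨v₀, hv₀mem, hv₀min⟩ :=
      (isCompact_sphere (0:E) 1).exists_isMinOn hsph hcont.continuousOn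
    have hv₀norm : ‖v₀‖ = 1 := by simpa using hv₀mem
    have hv₀ne : v₀ ≠ 0 := by
      intro hcontra; rw [hcontra] at hv₀norm; simp at hv₀norm
    refine ⟨⟪H v₀, v₀⟫, hpd v₀ hv₀ne, ?_⟩
    intro v
    rcases eq_or_ne v 0 with rfl | hv
    · simp
    · have hvpos : 0 < ‖v‖ := norm_pos_iff.2 hv
      have hu : (‖v‖⁻¹ • v) ∈ Metric.sphere (0:E) 1 := by
        simp [norm_smul, abs_of_pos (inv_pos.2 hvpos), inv_mul_cancel₀ (ne_of_gt hvpos)]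
      have h1 : ⟪H v₀, v₀⟫ ≤ ⟪H (‖v‖⁻¹ • v), ‖v‖⁻¹ • v⟫ := hv₀min hu
      have h2 : ⟪H (‖v‖⁻¹ • v), ‖v‖⁻¹ • v⟫ = ‖v‖⁻¹ * (‖v‖⁻¹ * ⟪H v, v⟫) := by
        simp [map_smul, real_inner_smul_left, real_inner_smul_right]
      rw [h2] at h1
      have h5 := mul_le_mul_of_nonneg_left h1 (mul_pos hvpos hvpos).le
      have h6 : ‖v‖ * ‖v‖ * (‖v‖⁻¹ * (‖v‖⁻¹ * ⟪H v, v⟫)) = ⟪H v, v⟫ := by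
        field_simp
      rw [h6] at h5
      nlinarith [h5]
  · refine ⟨1, one_pos, ?_⟩
    intro v
    rcases eq_or_ne v 0 with rfl | hv
    · simp
    · have hvpos : 0 < ‖v‖ := norm_pos_iff.2 hv
      exact absurd ⟨‖v‖⁻¹ • v, by
        simp [norm_smul, abs_of_pos (inv_pos.2 hvpos), inv_mul_cancel₀ (ne_of_gt hvpos)]⟩ hsph

set_option maxHeartbeats 1000000 in
private theorem quad_pos {G : Type*} [NormedAddCommGroup G] [NormedSpace ℝ G]
    (B B₀ : G →L[ℝ] G →L[ℝ] ℝ) (c : ℝ) (hdist : ‖B - B₀‖ < c / 2) (u : G)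
    (hu : c * ‖u‖ ^ 2 ≤ B₀ u u) (hupos : 0 < ‖u‖) : 0 < B u u := by
  set D := B - B₀ with hDdef
  have hDvv : |D u u| ≤ ‖D‖ * (‖u‖ * ‖u‖) := by
    have h1 : ‖D u u‖ ≤ ‖D u‖ * ‖u‖ := (D u).le_opNorm u
    have h2 : ‖D u‖ ≤ ‖D‖ * ‖u‖ := D.le_opNorm u
    calc |D u u| = ‖D u u‖ := (Real.norm_eq_abs _).symm
      _ ≤ ‖D u‖ * ‖u‖ := h1
      _ ≤ ‖D‖ * (‖u‖ * ‖u‖) := by nlinarith [norm_nonneg u, norm_nonneg (D u), h2]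
  have hDexp : D u u = B u u - B₀ u u := by rw [hDdef]; simp [ContinuousLinearMap.sub_apply]
  have h5 : -(‖D‖ * (‖u‖ * ‖u‖)) ≤ D u u := (abs_le.mp hDvv).1
  nlinarith [hDexp, hu, h5, mul_lt_mul_of_pos_right hdist (mul_pos hupos hupos),
    mul_pos hupos hupos, norm_nonneg D, sq_nonneg ‖u‖]

private def blockCLE {En Em : Type*} [NormedAddCommGroup En] [NormedAddCommGroup Em]
    [NormedSpace ℝ En] [NormedSpace ℝ Em]
    (K : (En × Em) →L[ℝ] Em) (N : Em ≃L[ℝ] Em)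
    (hN : ∀ v : Em, K (0, v) = N v) : (En × Em) ≃L[ℝ] En × Em :=
  ContinuousLinearEquiv.equivOfInverse
    ((ContinuousLinearMap.fst ℝ En Em).prod K)
    ((ContinuousLinearMap.fst ℝ En Em).prod
      ((N.symm : Em →L[ℝ] Em).comp
        ((ContinuousLinearMap.snd ℝ En Em) -
          K.comp ((ContinuousLinearMap.fst ℝ En Em).prod 0))))
    (fun p => by
      obtain ⟨da, dv⟩ := p
      have h1 : ((da, K (da, dv)) : En × Em) - ((da, K (da, (0:Em))) : En × Em)
          = (0, K (da, dv) - K (da, 0)) := by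
        simp [Prod.mk_sub_mk]
      have h2 : K (da, dv) - K (da, 0) = K (0, dv) := by
        rw [← map_sub]; norm_num [Prod.mk_sub_mk]
      simp only [ContinuousLinearMap.prod_apply, ContinuousLinearMap.coe_fst',
        ContinuousLinearMap.comp_apply, ContinuousLinearMap.sub_apply,
        ContinuousLinearMap.coe_snd', ContinuousLinearMap.zero_apply]
      rw [h2, hN]
      simp)
    (fun p => by
      obtain ⟨db, dw⟩ := p
      simp only [ContinuousLinearMap.prod_apply, ContinuousLinearMap.coe_fst',
        ContinuousLinearMap.comp_apply, ContinuousLinearMap.sub_apply,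
        ContinuousLinearMap.coe_snd', ContinuousLinearMap.zero_apply]
      have h3 : ∀ w : Em, K (db, w) = K (db, 0) + K (0, w) := by
        intro w
        rw [← map_add]
        norm_num
      rw [h3, hN]
      simp)



set_option maxHeartbeats 2000000 in
private theorem aux72 {E F : Type*} [NormedAddCommGroup E] [InnerProductSpace ℝ E]
    [NormedAddCommGroup F] [InnerProductSpace ℝ F] [FiniteDimensional ℝ E]
    [CompleteSpace F]
    (W : Set E) (hW : IsOpen W) (Fm : E → F) (hF : ContDiffOn ℝ (⊤ : ℕ∞) Fm W)
    (a₀ : F) (y₀ : E) (hy₀ : y₀ ∈ W)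
    (hmin : IsLocalMin (fun y => (1 / 2 : ℝ) * ‖a₀ - Fm y‖ ^ 2) y₀)
    (H Hinv : E →L[ℝ] E)
    (hH : ∀ v w, ⟪H v, w⟫ =
      fderiv ℝ (fderiv ℝ (fun y => (1 / 2 : ℝ) * ‖a₀ - Fm y‖ ^ 2)) y₀ v w)
    (hHinv₁ : H.comp Hinv = ContinuousLinearMap.id ℝ E)
    (hHinv₂ : Hinv.comp H = ContinuousLinearMap.id ℝ E) :
    ∃ (A : Set F) (Y : Set E) (g : F → E),
      IsOpen A ∧ a₀ ∈ A ∧ IsOpen Y ∧ y₀ ∈ Y ∧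
      IsCompact (closure Y) ∧ closure Y ⊆ W ∧
      ContDiffOn ℝ (⊤ : ℕ∞) g A ∧ g a₀ = y₀ ∧
      ∀ a ∈ A, g a ∈ Y ∧
        (∀ y ∈ closure Y, y ≠ g a →
          (1 / 2 : ℝ) * ‖a - Fm (g a)‖ ^ 2 < (1 / 2 : ℝ) * ‖a - Fm y‖ ^ 2) ∧
        (∀ y ∈ Y, fderiv ℝ (fun z => (1 / 2 : ℝ) * ‖a - Fm z‖ ^ 2) y = 0 → y = g a) := by
  classical
  have hinfty1 : (1 : WithTop ℕ∞) ≤ ((⊤:ℕ∞) : WithTop ℕ∞) := by exact_mod_cast le_top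
  set q : F × E → ℝ := fun p => (1 / 2 : ℝ) * ‖p.1 - Fm p.2‖ ^ 2 with hqdef
  set U : Set (F × E) := (univ : Set F) ×ˢ W with hUdef
  have hU : IsOpen U := isOpen_univ.prod hW
  have hp₀U : ((a₀, y₀) : F × E) ∈ U := ⟨trivial, hy₀⟩
  have hq : ContDiffOn ℝ (⊤ : ℕ∞) q U := by
    apply ContDiffOn.mul contDiffOn_const
    exact (contDiff_norm_sq ℝ).comp_contDiffOn
      ((contDiff_fst.contDiffOn).sub (hF.comp (contDiff_snd.contDiffOn) (fun p hp => hp.2)))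
  have hq1 : ContDiffOn ℝ (⊤ : ℕ∞) (fderiv ℝ q) U := hq.fderiv_of_isOpen hU (le_of_eq rfl)
  have hqdiffAt : ∀ p ∈ U, HasFDerivAt q (fderiv ℝ q p) p := fun p hp =>
    ((hq.differentiableOn (by simp)).differentiableAt (hU.mem_nhds hp)).hasFDerivAt
  have hq1diffAt : ∀ p ∈ U, HasFDerivAt (fderiv ℝ q) (fderiv ℝ (fderiv ℝ q) p) p := fun p hp =>
    ((hq1.differentiableOn (by simp)).differentiableAt (hU.mem_nhds hp)).hasFDerivAt
  have hB2cont : ContinuousOn (fderiv ℝ (fderiv ℝ q)) U :=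
    hq1.continuousOn_fderiv_of_isOpen hU hinfty1
  set inrP : E →L[ℝ] F × E := ContinuousLinearMap.inr ℝ F E with hinrdef
  set R : ((F × E) →L[ℝ] ℝ) →L[ℝ] (E →L[ℝ] ℝ) :=
    (ContinuousLinearMap.compL ℝ E (F × E) ℝ).flip inrP with hRdef
  have hR : ∀ T : (F × E) →L[ℝ] ℝ, R T = T.comp inrP := fun T => rfl
  have hRapp : ∀ (T : (F × E) →L[ℝ] ℝ) (v : E), R T v = T (0, v) := fun T v => rfl
  -- first derivative of the parameterized objective
  have hfaD : ∀ (a : F), ∀ z ∈ W,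
      HasFDerivAt (fun y => (1 / 2 : ℝ) * ‖a - Fm y‖ ^ 2) (R (fderiv ℝ q (a, z))) z := by
    intro a z hz
    have h1 : HasFDerivAt (fun y : E => ((a, y) : F × E)) inrP z := hasFDerivAt_prodMk_right a z
    have h2 := (hqdiffAt (a, z) ⟨trivial, hz⟩).comp z h1
    rw [hR _]
    exact h2
  -- second derivative
  have hfaD2 : ∀ (a : F), ∀ z ∈ W,
      HasFDerivAt (fun z' : E => R (fderiv ℝ q (a, z')))
        (R.comp ((fderiv ℝ (fderiv ℝ q) (a, z)).comp inrP)) z := by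
    intro a z hz
    have h1 : HasFDerivAt (fun y : E => ((a, y) : F × E)) inrP z := hasFDerivAt_prodMk_right a z
    have h2 := (hq1diffAt (a, z) ⟨trivial, hz⟩).comp z h1
    exact R.hasFDerivAt.comp z h2
  set B₀ : (F × E) →L[ℝ] (F × E) →L[ℝ] ℝ := fderiv ℝ (fderiv ℝ q) (a₀, y₀) with hB₀def
  have hfev : fderiv ℝ (fun y => (1 / 2 : ℝ) * ‖a₀ - Fm y‖ ^ 2) =ᶠ[𝓝 y₀]
      (fun z => R (fderiv ℝ q (a₀, z))) := by
    filter_upwards [hW.mem_nhds hy₀] with z hz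
    exact (hfaD a₀ z hz).fderiv
  have hsnd : fderiv ℝ (fderiv ℝ (fun y => (1 / 2 : ℝ) * ‖a₀ - Fm y‖ ^ 2)) y₀
      = R.comp (B₀.comp inrP) := by
    rw [hfev.fderiv_eq]
    exact (hfaD2 a₀ y₀ hy₀).fderiv
  have hHB : ∀ v w : E, ⟪H v, w⟫ = B₀ (0, v) (0, w) := by
    intro v w
    rw [hH v w, hsnd]
    rfl
  have hcrit₀ : R (fderiv ℝ q (a₀, y₀)) = 0 := by
    have h1 := (hfaD a₀ y₀ hy₀).fderiv
    rw [← h1]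
    exact hmin.fderiv_eq_zero
  have hfd' : ∀ᶠ y in 𝓝 y₀, HasFDerivAt (fun y => (1 / 2 : ℝ) * ‖a₀ - Fm y‖ ^ 2)
      (fderiv ℝ (fun y => (1 / 2 : ℝ) * ‖a₀ - Fm y‖ ^ 2) y) y := by
    filter_upwards [hW.mem_nhds hy₀] with z hz
    exact ((hfaD a₀ z hz).differentiableAt).hasFDerivAt
  have hf2At : HasFDerivAt (fderiv ℝ (fun y => (1 / 2 : ℝ) * ‖a₀ - Fm y‖ ^ 2))
      (fderiv ℝ (fderiv ℝ (fun y => (1 / 2 : ℝ) * ‖a₀ - Fm y‖ ^ 2)) y₀) y₀ := by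
    rw [hsnd]
    exact (hfaD2 a₀ y₀ hy₀).congr_of_eventuallyEq hfev
  have hpsd : ∀ v : E, 0 ≤ ⟪H v, v⟫ := fun v => by
    rw [hH v v]
    exact second_deriv_nonneg_of_isLocalMin hfd' hf2At hmin v
  have hsymm : ∀ v w : E, ⟪H v, w⟫ = ⟪H w, v⟫ := fun v w => by
    rw [hH v w, hH w v]
    exact second_derivative_symmetric_of_eventually hfd' hf2At v w
  obtain ⟨c, hcpos, hcb⟩ := coercivity_of_psd H Hinv hHinv₂ hpsd hsymm
  -- gradient-type map and operator-valued Hessian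
  set e : (E →L[ℝ] ℝ) ≃L[ℝ] E :=
    (InnerProductSpace.toDual ℝ E).symm.toContinuousLinearEquiv with hedef
  set eR : ((F × E) →L[ℝ] ℝ) →L[ℝ] E :=
    ((e : (E →L[ℝ] ℝ) →L[ℝ] E).comp R) with heRdef
  set Mop : F × E → (E →L[ℝ] E) :=
    fun p => eR.comp ((fderiv ℝ (fderiv ℝ q) p).comp inrP) with hMopdef
  have hMopApp : ∀ p (v : E), Mop p v = eR ((fderiv ℝ (fderiv ℝ q) p) (0, v)) :=
    fun p v => rfl
  have hinnerE : ∀ (T : E →L[ℝ] ℝ) (w : E), ⟪e T, w⟫ = T w := fun T w => by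
    simp [hedef, InnerProductSpace.toDual_symm_apply]
  have hMop₀ : Mop (a₀, y₀) = H := by
    ext v
    apply ext_inner_right ℝ
    intro w
    rw [hMopApp]
    calc ⟪eR (B₀ (0, v)), w⟫ = B₀ (0, v) (0, w) := by
          rw [show eR (B₀ (0,v)) = e (R (B₀ (0,v))) from rfl, hinnerE, hRapp]
      _ = ⟪H v, w⟫ := (hHB v w).symm
  have hHunit : IsUnit (Mop (a₀, y₀)) := by
    rw [hMop₀]
    refine ⟨⟨H, Hinv, ?_, ?_⟩, rfl⟩
    · ext v
      rw [ContinuousLinearMap.mul_apply, ContinuousLinearMap.one_apply]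
      simpa using DFunLike.congr_fun hHinv₁ v
    · ext v
      rw [ContinuousLinearMap.mul_apply, ContinuousLinearMap.one_apply]
      simpa using DFunLike.congr_fun hHinv₂ v
  have hMopCont : ContinuousOn Mop U :=
    continuousOn_const.clm_comp (hB2cont.clm_comp continuousOn_const)
  set V : Set (F × E) :=
    (U ∩ (fderiv ℝ (fderiv ℝ q)) ⁻¹' {T | ‖T - B₀‖ < c/2}) ∩ Mop ⁻¹' {T | IsUnit T} with hVdef
  have hVopen : IsOpen V := by
    have h0 : IsOpen {T : (F × E) →L[ℝ] (F × E) →L[ℝ] ℝ | ‖T - B₀‖ < c/2} :=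
      isOpen_lt ((continuous_id.sub continuous_const).norm) continuous_const
    have h1 : IsOpen (U ∩ (fderiv ℝ (fderiv ℝ q)) ⁻¹' {T | ‖T - B₀‖ < c/2}) :=
      hB2cont.isOpen_inter_preimage hU h0
    exact (hMopCont.mono inter_subset_left).isOpen_inter_preimage h1 Units.isOpen
  have hp₀V : ((a₀, y₀) : F × E) ∈ V :=
    ⟨⟨hp₀U, by
      simp only [mem_preimage, mem_setOf_eq, ← hB₀def, sub_self, norm_zero]
      exact half_pos hcpos⟩, hHunit⟩
  have hVU : V ⊆ U := fun p hp => hp.1.1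
  obtain ⟨s, hs, t, ht, hst⟩ := mem_nhds_prod_iff.mp (hVopen.mem_nhds hp₀V)
  obtain ⟨δ, hδpos, hδball⟩ := Metric.mem_nhds_iff.mp hs
  obtain ⟨ρ', hρ'pos, hρ'ball⟩ := Metric.mem_nhds_iff.mp ht
  set ρ := ρ' / 2 with hρdef
  have hρpos : 0 < ρ := half_pos hρ'pos
  have hsub : ∀ a ∈ Metric.ball a₀ δ, ∀ z ∈ Metric.closedBall y₀ ρ, ((a, z) : F × E) ∈ V := by
    intro a ha z hz
    apply hst
    refine ⟨hδball ha, hρ'ball ?_⟩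
    rw [Metric.mem_ball]
    have h1 := Metric.mem_closedBall.mp hz
    rw [hρdef] at h1
    linarith
  have hballW : Metric.closedBall y₀ ρ ⊆ W := fun z hz =>
    ((hsub a₀ (Metric.mem_ball_self hδpos) z hz).1.1).2
  -- the implicit-function setup
  set Φ : F × E → F × E := fun p => (p.1, eR (fderiv ℝ q p)) with hΦdef
  have hΦsmooth : ∀ p ∈ U, ContDiffAt ℝ (⊤:ℕ∞) Φ p := by
    intro p hp
    apply ContDiffAt.prodMk contDiffAt_fst
    exact eR.contDiff.comp_contDiffAt p (hq1.contDiffAt (hU.mem_nhds hp))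
  have hΦderivAt : ∀ p ∈ U, HasFDerivAt Φ
      ((ContinuousLinearMap.fst ℝ F E).prod (eR.comp (fderiv ℝ (fderiv ℝ q) p))) p := by
    intro p hp
    have h2 := (ContinuousLinearMap.hasFDerivAt (f := eR)
      (x := fderiv ℝ q p)).comp p (hq1diffAt p hp)
    exact hasFDerivAt_fst.prodMk h2
  set N₀ : E ≃L[ℝ] E := ContinuousLinearEquiv.equivOfInverse H Hinv
      (fun v => by simpa using DFunLike.congr_fun hHinv₂ v)
      (fun v => by simpa using DFunLike.congr_fun hHinv₁ v) with hN₀def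
  have hN₀ : ∀ v : E,
      ((eR.comp (fderiv ℝ (fderiv ℝ q) ((a₀, y₀) : F × E))) : (F × E) →L[ℝ] E) (0, v) = N₀ v := by
    intro v
    have h1 : ((eR.comp (fderiv ℝ (fderiv ℝ q) ((a₀, y₀) : F × E))) : (F × E) →L[ℝ] E) (0, v)
        = Mop (a₀, y₀) v := rfl
    rw [h1, hMop₀]
    rfl
  set Φeq₀ := blockCLE (eR.comp (fderiv ℝ (fderiv ℝ q) ((a₀, y₀) : F × E))) N₀ hN₀ with hΦeq₀def
  have hcoe₀ : (Φeq₀ : (F × E) →L[ℝ] F × E)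
      = (ContinuousLinearMap.fst ℝ F E).prod
          (eR.comp (fderiv ℝ (fderiv ℝ q) ((a₀, y₀) : F × E))) := rfl
  have hstrict : HasStrictFDerivAt Φ (Φeq₀ : (F × E) →L[ℝ] F × E) (a₀, y₀) :=
    (hΦsmooth _ hp₀U).hasStrictFDerivAt' (hcoe₀ ▸ hΦderivAt _ hp₀U) (by simp)
  set PHI := hstrict.toOpenPartialHomeomorph Φ with hPHIdef
  have hΦp₀ : Φ (a₀, y₀) = (a₀, 0) := by
    have h1 : Φ (a₀, y₀) = (a₀, e (R (fderiv ℝ q (a₀, y₀)))) := rfl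
    rw [h1, hcrit₀, map_zero]
  have hsrc : ((a₀, y₀) : F × E) ∈ PHI.source := hstrict.mem_toOpenPartialHomeomorph_source
  have htgt : ((a₀, 0) : F × E) ∈ PHI.target := by
    rw [← hΦp₀]; exact hstrict.image_mem_toOpenPartialHomeomorph_target
  have hleft₀ : PHI.symm (a₀, 0) = (a₀, y₀) := by
    rw [← hΦp₀]
    exact PHI.left_inv hsrc
  set Tset : Set (F × E) :=
    PHI.target ∩ PHI.symm ⁻¹' (V ∩ (univ : Set F) ×ˢ Metric.ball y₀ ρ) with hTdef
  have hTopen : IsOpen Tset :=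
    PHI.symm.continuousOn.isOpen_inter_preimage PHI.open_target
      (hVopen.inter (isOpen_univ.prod Metric.isOpen_ball))
  set g : F → E := fun a => (PHI.symm (a, 0)).2 with hgdef
  set A : Set F := (fun a : F => ((a, 0) : F × E)) ⁻¹' Tset ∩ Metric.ball a₀ δ with hAdef
  have hι : Continuous fun a : F => ((a, 0) : F × E) := continuous_id.prodMk continuous_const
  have hAopen : IsOpen A := (hTopen.preimage hι).inter Metric.isOpen_ball
  have ha₀A : a₀ ∈ A := by
    refine ⟨?_, Metric.mem_ball_self hδpos⟩
    show ((a₀, 0) : F × E) ∈ Tset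
    refine ⟨htgt, ?_⟩
    rw [mem_preimage, hleft₀]
    exact ⟨hp₀V, ⟨trivial, Metric.mem_ball_self hρpos⟩⟩
  have hga₀ : g a₀ = y₀ := by
    show (PHI.symm (a₀, 0)).2 = y₀
    rw [hleft₀]
  have hAprop : ∀ a ∈ A, (a, g a) ∈ V ∧ g a ∈ Metric.ball y₀ ρ ∧
      R (fderiv ℝ q (a, g a)) = 0 := by
    intro a ha
    obtain ⟨haT, haδ⟩ := ha
    obtain ⟨htg, hpre⟩ := haT
    rw [mem_preimage] at hpre
    have hri : Φ (PHI.symm (a, 0)) = (a, 0) := PHI.right_inv htg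
    have hfst : (PHI.symm (a, 0)).1 = a := congrArg Prod.fst hri
    have hp : PHI.symm (a, 0) = (a, g a) := Prod.ext hfst rfl
    rw [hp] at hpre hri
    have hsnd2 : e (R (fderiv ℝ q (a, g a))) = 0 := congrArg Prod.snd hri
    have hsnd' : R (fderiv ℝ q (a, g a)) = 0 := by
      have h0 : e.symm (e (R (fderiv ℝ q (a, g a)))) = e.symm 0 := congrArg e.symm hsnd2
      rwa [ContinuousLinearEquiv.symm_apply_apply, map_zero] at h0
    exact ⟨hpre.1, hpre.2.2, hsnd'⟩
  have hgsmooth : ContDiffOn ℝ (⊤:ℕ∞) g A := by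
    intro a ha
    apply ContDiffAt.contDiffWithinAt
    obtain ⟨haT, haδ⟩ := ha
    obtain ⟨htg, hpre⟩ := haT
    rw [mem_preimage] at hpre
    have hpV : PHI.symm (a, 0) ∈ V := hpre.1
    have hu : IsUnit (Mop (PHI.symm (a, 0))) := hpV.2
    have hNp : ∀ v : E,
        ((eR.comp (fderiv ℝ (fderiv ℝ q) (PHI.symm (a, 0)))) : (F × E) →L[ℝ] E) (0, v)
          = (ContinuousLinearEquiv.unitsEquiv ℝ E hu.unit) v := by
      intro v
      have h1 : (ContinuousLinearEquiv.unitsEquiv ℝ E hu.unit) v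
          = (hu.unit : E →L[ℝ] E) v := rfl
      rw [h1, hu.unit_spec]
      rfl
    have hsymmAt : ContDiffAt ℝ (⊤:ℕ∞) PHI.symm (a, 0) := by
      apply PHI.contDiffAt_symm htg
        (f₀' := blockCLE (eR.comp (fderiv ℝ (fderiv ℝ q) (PHI.symm (a, 0))))
          (ContinuousLinearEquiv.unitsEquiv ℝ E hu.unit) hNp)
      · exact hΦderivAt _ (hVU hpV)
      · exact hΦsmooth _ (hVU hpV)
    exact contDiffAt_snd.comp a (hsymmAt.comp a (contDiffAt_id.prodMk contDiffAt_const))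
  set Y : Set E := Metric.ball y₀ ρ with hYdef
  have hYclo : closure Y = Metric.closedBall y₀ ρ := closure_ball y₀ (ne_of_gt hρpos)
  refine ⟨A, Y, g, hAopen, ha₀A, Metric.isOpen_ball, Metric.mem_ball_self hρpos, ?_, ?_,
    hgsmooth, hga₀, ?_⟩
  · rw [hYclo]; exact isCompact_closedBall y₀ ρ
  · rw [hYclo]; exact hballW
  intro a ha
  obtain ⟨hgaV, hgaY, hgacrit⟩ := hAprop a ha
  have haδ : a ∈ Metric.ball a₀ δ := ha.2
  have hd1 : ∀ z ∈ Metric.closedBall y₀ ρ,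
      HasFDerivAt (fun y => (1 / 2 : ℝ) * ‖a - Fm y‖ ^ 2) (R (fderiv ℝ q (a, z))) z :=
    fun z hz => hfaD a z (hballW hz)
  have hd2 : ∀ z ∈ Metric.closedBall y₀ ρ,
      HasFDerivAt (fun z' : E => R (fderiv ℝ q (a, z')))
        (R.comp ((fderiv ℝ (fderiv ℝ q) (a, z)).comp inrP)) z :=
    fun z hz => hfaD2 a z (hballW hz)
  have hpos : ∀ z ∈ Metric.closedBall y₀ ρ, ∀ v : E, v ≠ 0 →
      0 < (R.comp ((fderiv ℝ (fderiv ℝ q) (a, z)).comp inrP)) v v := by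
    intro z hz v hv
    have hmem : ((a, z) : F × E) ∈ V := hsub a haδ z hz
    have hdist : ‖fderiv ℝ (fderiv ℝ q) (a, z) - B₀‖ < c/2 := hmem.1.2
    have happ : (R.comp ((fderiv ℝ (fderiv ℝ q) (a, z)).comp inrP)) v v
        = fderiv ℝ (fderiv ℝ q) (a, z) ((0 : F), v) ((0 : F), v) := rfl
    rw [happ]
    have h3 : ‖(((0 : F), v) : F × E)‖ = ‖v‖ := by simp [Prod.norm_def]
    apply quad_pos _ B₀ c hdist
    · rw [h3, ← hHB v v]; exact hcb v
    · rw [h3]; exact norm_pos_iff.2 hv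
  refine ⟨hgaY, ?_, ?_⟩
  · intro y hyclo hne
    rw [hYclo] at hyclo
    exact (key_segment (convex_closedBall y₀ ρ) hd1 hd2 hpos
      (Metric.ball_subset_closedBall hgaY) hyclo hne hgacrit).1
  · intro y hyY hyfderiv
    by_contra hne
    have hkey := key_segment (convex_closedBall y₀ ρ) hd1 hd2 hpos
      (Metric.ball_subset_closedBall hgaY) (Metric.ball_subset_closedBall hyY) hne hgacrit
    have h0 : R (fderiv ℝ q (a, y)) = 0 := by
      have h1 := (hd1 y (Metric.ball_subset_closedBall hyY)).fderiv
      rw [← h1]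
      exact hyfderiv
    rw [h0] at hkey
    simpa using hkey.2


/-- Chart formulation of Theorem 7.2 (condition of local minimizers): a nondegenerate local
minimizer of a least-squares problem extends to a localized approximation problem with a unique,
smoothly varying global minimizer. -/
theorem stmt_2 {m n : ℕ}
    (W : Set (EuclideanSpace ℝ (Fin m))) (hW : IsOpen W)
    (F : EuclideanSpace ℝ (Fin m) → EuclideanSpace ℝ (Fin n))
    (hF : ContDiffOn ℝ (⊤ : ℕ∞) F W)
    (a₀ : EuclideanSpace ℝ (Fin n))
    (y₀ : EuclideanSpace ℝ (Fin m)) (hy₀ : y₀ ∈ W)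
    (hmin : IsLocalMin (fun y => (1 / 2 : ℝ) * ‖a₀ - F y‖ ^ 2) y₀)
    (H Hinv : EuclideanSpace ℝ (Fin m) →L[ℝ] EuclideanSpace ℝ (Fin m))
    (hH : ∀ v w, ⟪H v, w⟫ =
      fderiv ℝ (fderiv ℝ (fun y => (1 / 2 : ℝ) * ‖a₀ - F y‖ ^ 2)) y₀ v w)
    (hHinv₁ : H.comp Hinv = ContinuousLinearMap.id ℝ (EuclideanSpace ℝ (Fin m)))
    (hHinv₂ : Hinv.comp H = ContinuousLinearMap.id ℝ (EuclideanSpace ℝ (Fin m))) :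
    ∃ (A : Set (EuclideanSpace ℝ (Fin n))) (Y : Set (EuclideanSpace ℝ (Fin m)))
      (g : EuclideanSpace ℝ (Fin n) → EuclideanSpace ℝ (Fin m)),
      IsOpen A ∧ a₀ ∈ A ∧ IsOpen Y ∧ y₀ ∈ Y ∧
      IsCompact (closure Y) ∧ closure Y ⊆ W ∧
      ContDiffOn ℝ (⊤ : ℕ∞) g A ∧ g a₀ = y₀ ∧
      ∀ a ∈ A, g a ∈ Y ∧
        (∀ y ∈ closure Y, y ≠ g a →
          (1 / 2 : ℝ) * ‖a - F (g a)‖ ^ 2 < (1 / 2 : ℝ) * ‖a - F y‖ ^ 2) ∧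
        (∀ y ∈ Y, fderiv ℝ (fun z => (1 / 2 : ℝ) * ‖a - F z‖ ^ 2) y = 0 → y = g a) := by
  exact aux72 W hW F hF a₀ y₀ hy₀ hmin H Hinv hH hHinv₁ hHinv₂
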